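/- Let σ, a, b, k, ω, ρ be real with a ≠ 0, b = ρω ≠ 0, and let v : ℝ → ℝ be twice differentiable. Define u(S,t) = S^(1-k)·v(log S + a t) for S > 0. Then u satisfies u_t + (σ²S²/2)·u_SS/(1 - b S^(k+1) u_SS)² = 0 on the set where 1 - b S^(k+1) u_SS ≠ 0 if and only if v satisfies a·v_z + (σ²/2)·(v_zz + (1-2k)v_z - k(1-k)v)/(1 - b(v_zz + (1-2k)v_z - k(1-k)v))² = 0 on the corresponding set. -/

import Mathlib

open Real

/-- The substitution `z = log S + a t`, `u(S,t) = S^(1-k)·v(z)` reduces the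
nonlinear Black–Scholes PDE to the ODE
`a·v_z + (σ²/2)·(v_zz + (1-2k)v_z - k(1-k)v)/(1 - b(v_zz + (1-2k)v_z - k(1-k)v))² = 0`
on the set where the denominator is nonzero. -/
theorem stmt_8 (σ a b k ω ρ : ℝ) (ha : a ≠ 0) (hbρω : b = ρ * ω) (hb : b ≠ 0)
    (v : ℝ → ℝ) (hv : ContDiff ℝ 2 v)
    (u : ℝ → ℝ → ℝ)
    (hu : ∀ S t, 0 < S → u S t = S ^ (1 - k) * v (Real.log S + a * t)) :
    ((∀ S t : ℝ, 0 < S →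
        (1 - b * S ^ (k + 1) * deriv (deriv (fun s => u s t)) S ≠ 0 →
          deriv (fun τ => u S τ) t +
            σ ^ 2 * S ^ 2 / 2 *
              (deriv (deriv (fun s => u s t)) S /
                (1 - b * S ^ (k + 1) * deriv (deriv (fun s => u s t)) S) ^ 2) = 0))
      ↔
      (∀ z : ℝ,
        (1 - b * (deriv (deriv v) z + (1 - 2 * k) * deriv v z
            - k * (1 - k) * v z) ≠ 0 →
          a * deriv v z +
            σ ^ 2 / 2 *
              ((deriv (deriv v) z + (1 - 2 * k) * deriv v z - k * (1 - k) * v z) /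
                (1 - b * (deriv (deriv v) z + (1 - 2 * k) * deriv v z
                  - k * (1 - k) * v z)) ^ 2) = 0))) := by
  have hdv : Differentiable ℝ v := hv.differentiable (by norm_num)
  have hdv2 : Differentiable ℝ (deriv v) := by
    have h2 : ContDiff ℝ ((1:ℕ∞)+1) v := by exact_mod_cast hv
    exact ((contDiff_succ_iff_deriv.mp h2).2.2).differentiable (by simp)
  set W : ℝ → ℝ := fun z => deriv (deriv v) z + (1 - 2 * k) * deriv v z
      - k * (1 - k) * v z with hW
  -- time derivative
  have hderivt : ∀ S t : ℝ, 0 < S →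
      deriv (fun τ => u S τ) t = S ^ (1 - k) * (a * deriv v (log S + a * t)) := by
    intro S t hS
    have heq : (fun τ => u S τ) = fun τ => S ^ (1 - k) * v (log S + a * τ) :=
      funext fun τ => hu S τ hS
    rw [heq]
    have h2 : HasDerivAt (fun τ : ℝ => log S + a * τ) a t := by
      simpa using ((hasDerivAt_id t).const_mul a).const_add (log S)
    have h3 : HasDerivAt (fun τ => v (log S + a * τ))
        (deriv v (log S + a * t) * a) t :=
      HasDerivAt.comp t ((hdv _).hasDerivAt) h2
    rw [(h3.const_mul (S ^ (1 - k))).deriv]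
    ring
  -- first spatial derivative
  have hderiv1 : ∀ t : ℝ, ∀ s : ℝ, 0 < s →
      deriv (fun s' => u s' t) s
        = s ^ (-k) * ((1 - k) * v (log s + a * t) + deriv v (log s + a * t)) := by
    intro t s hs
    have heq : (fun s' => u s' t) =ᶠ[nhds s]
        (fun s' => s' ^ (1 - k) * v (log s' + a * t)) :=
      Filter.eventuallyEq_of_mem (Ioi_mem_nhds hs) (fun s' hs' => hu s' t hs')
    rw [heq.deriv_eq]
    have h1 : HasDerivAt (fun s' : ℝ => s' ^ (1 - k))
        ((1 - k) * s ^ (1 - k - 1)) s :=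
      Real.hasDerivAt_rpow_const (Or.inl (ne_of_gt hs))
    have h2 : HasDerivAt (fun s' : ℝ => log s' + a * t) s⁻¹ s :=
      (Real.hasDerivAt_log (ne_of_gt hs)).add_const _
    have h3 : HasDerivAt (fun s' => v (log s' + a * t))
        (deriv v (log s + a * t) * s⁻¹) s :=
      HasDerivAt.comp s ((hdv _).hasDerivAt) h2
    rw [show (fun s' => s' ^ (1 - k) * v (log s' + a * t)) = (fun s' => s' ^ (1 - k)) * (fun s' => v (log s' + a * t)) from rfl, (h1.mul h3).deriv]
    have e1 : s ^ (1 - k - 1) = s ^ (-k) := by congr 1; ring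
    have e2 : s ^ (1 - k) * s⁻¹ = s ^ (-k) := by
      rw [← Real.rpow_neg_one s, ← Real.rpow_add hs]; congr 1; ring
    rw [e1, ← mul_assoc, mul_comm (s ^ (1-k)) (deriv v (log s + a * t)), mul_assoc,
      mul_assoc, e2]
    ring
  -- second spatial derivative
  have hderiv2 : ∀ t : ℝ, ∀ s : ℝ, 0 < s →
      deriv (deriv (fun s' => u s' t)) s = s ^ (-(k+1)) * W (log s + a * t) := by
    intro t s hs
    have heq : deriv (fun s' => u s' t) =ᶠ[nhds s]
        (fun s' => s' ^ (-k) * ((1 - k) * v (log s' + a * t)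
          + deriv v (log s' + a * t))) :=
      Filter.eventuallyEq_of_mem (Ioi_mem_nhds hs) (fun s' hs' => hderiv1 t s' hs')
    rw [heq.deriv_eq]
    have h1 : HasDerivAt (fun s' : ℝ => s' ^ (-k)) ((-k) * s ^ (-k - 1)) s :=
      Real.hasDerivAt_rpow_const (Or.inl (ne_of_gt hs))
    have h2 : HasDerivAt (fun s' : ℝ => log s' + a * t) s⁻¹ s :=
      (Real.hasDerivAt_log (ne_of_gt hs)).add_const _
    have h3 : HasDerivAt (fun s' => v (log s' + a * t))
        (deriv v (log s + a * t) * s⁻¹) s :=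
      HasDerivAt.comp s ((hdv _).hasDerivAt) h2
    have h4 : HasDerivAt (fun s' => deriv v (log s' + a * t))
        (deriv (deriv v) (log s + a * t) * s⁻¹) s :=
      HasDerivAt.comp s ((hdv2 _).hasDerivAt) h2
    have h5 : HasDerivAt (fun s' => (1 - k) * v (log s' + a * t)
        + deriv v (log s' + a * t))
        ((1 - k) * (deriv v (log s + a * t) * s⁻¹)
          + deriv (deriv v) (log s + a * t) * s⁻¹) s :=
      (h3.const_mul (1 - k)).add h4
    rw [show (fun s' => s' ^ (-k) * ((1 - k) * v (log s' + a * t) + deriv v (log s' + a * t))) = (fun s' => s' ^ (-k)) * (fun s' => (1 - k) * v (log s' + a * t) + deriv v (log s' + a * t)) from rfl, (h1.mul h5).deriv]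
    have e1 : s ^ (-k - 1) = s ^ (-(k+1)) := by congr 1; ring
    have e2 : s ^ (-k) * s⁻¹ = s ^ (-(k+1)) := by
      rw [← Real.rpow_neg_one s, ← Real.rpow_add hs]; congr 1; ring
    have e3 : s ^ (-k) * ((1 - k) * (deriv v (log s + a * t) * s⁻¹)
          + deriv (deriv v) (log s + a * t) * s⁻¹)
        = s ^ (-(k+1)) * ((1 - k) * deriv v (log s + a * t)
          + deriv (deriv v) (log s + a * t)) := by
      rw [← e2]; ring
    rw [e1, e3, hW]
    ring
  -- key algebraic identities for the PDE at (S, t)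
  have hkey : ∀ S t : ℝ, 0 < S →
      (1 - b * S ^ (k + 1) * deriv (deriv (fun s => u s t)) S
          = 1 - b * W (log S + a * t))
      ∧ (deriv (fun τ => u S τ) t +
            σ ^ 2 * S ^ 2 / 2 *
              (deriv (deriv (fun s => u s t)) S /
                (1 - b * S ^ (k + 1) * deriv (deriv (fun s => u s t)) S) ^ 2)
          = S ^ (1 - k) * (a * deriv v (log S + a * t) +
              σ ^ 2 / 2 * (W (log S + a * t) /
                (1 - b * W (log S + a * t)) ^ 2))) := by
    intro S t hS
    have hd2 := hderiv2 t S hS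
    have hdt := hderivt S t hS
    have epow : S ^ (k + 1) * S ^ (-(k+1)) = 1 := by
      rw [← Real.rpow_add hS, show k + 1 + -(k+1) = 0 by ring, Real.rpow_zero]
    have h1 : 1 - b * S ^ (k + 1) * deriv (deriv (fun s => u s t)) S
        = 1 - b * W (log S + a * t) := by
      rw [hd2, mul_assoc, ← mul_assoc (S ^ (k+1)), epow, one_mul]
    refine ⟨h1, ?_⟩
    rw [h1, hd2, hdt]
    have epow2 : (S:ℝ) ^ (2:ℕ) * S ^ (-(k+1)) = S ^ (1 - k) := by
      rw [← Real.rpow_natCast S 2, ← Real.rpow_add hS]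
      congr 1; push_cast; ring
    field_simp
    rw [← epow2]
    ring
  have hSne : ∀ S : ℝ, 0 < S → (S:ℝ) ^ (1 - k) ≠ 0 :=
    fun S hS => ne_of_gt (Real.rpow_pos_of_pos hS _)
  constructor
  · intro h z hz
    have hS : (0:ℝ) < Real.exp z := Real.exp_pos z
    have hz' : Real.log (Real.exp z) + a * 0 = z := by simp
    have h1 := (hkey (Real.exp z) 0 hS).1
    have h2 := (hkey (Real.exp z) 0 hS).2
    rw [hz'] at h1 h2
    have hne : 1 - b * Real.exp z ^ (k + 1)
        * deriv (deriv (fun s => u s 0)) (Real.exp z) ≠ 0 := by rw [h1]; exact hz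
    have := h (Real.exp z) 0 hS hne
    rw [h2] at this
    rcases mul_eq_zero.mp this with h0 | h0
    · exact absurd h0 (hSne _ hS)
    · exact h0
  · intro h S t hS hne
    have h1 := (hkey S t hS).1
    have h2 := (hkey S t hS).2
    rw [h2]
    have hz : 1 - b * W (log S + a * t) ≠ 0 := by rw [← h1]; exact hne
    rw [h (log S + a * t) hz, mul_zero]
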